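/- Let Ĥ(k) = diag(e^{ik}, e^{-ik})·H, φ₀ = (1/√2, i/√2)ᵀ, and μ_d(k) = ⟨Ĥ(k)^d φ₀, (i d/dk)(Ĥ(k)^d φ₀)⟩/d. For d = 2, μ₂(k) = (sin 2k)/2 for all k ∈ ℝ. -/

import Mathlib

open Matrix Complex

/-- The 2×2 Hadamard matrix `(1/√2)[[1,1],[1,-1]]`. -/
noncomputable def hadamard2 : Matrix (Fin 2) (Fin 2) ℂ :=
  ((1 / Real.sqrt 2 : ℝ) : ℂ) • !![1, 1; 1, -1]

/-- The Fourier-transformed one-step evolution `Ĥ(k) = diag(e^{ik}, e^{-ik})·H`. -/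
noncomputable def Hhat (k : ℝ) : Matrix (Fin 2) (Fin 2) ℂ :=
  Matrix.diagonal ![Complex.exp (Complex.I * k), Complex.exp (-(Complex.I * k))] * hadamard2

/-- The symmetric initial qubit `φ₀ = (1/√2, i/√2)ᵀ`. -/
noncomputable def phi0 : Fin 2 → ℂ :=
  ![((1 / Real.sqrt 2 : ℝ) : ℂ), Complex.I * ((1 / Real.sqrt 2 : ℝ) : ℂ)]

lemma hvec (k : ℝ) : Hhat k ^ 2 *ᵥ phi0 =
    ![(1+I)/(2*Real.sqrt 2) * Complex.exp (2*I*k) + (1-I)/(2*Real.sqrt 2),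
      (I-1)/(2*Real.sqrt 2) * Complex.exp (-(2*I*k)) + (1+I)/(2*Real.sqrt 2)] := by
  have h2 : ((Real.sqrt 2 : ℝ) : ℂ) ≠ 0 := by
    simp [Real.sqrt_eq_zero']
  have hs : ((Real.sqrt 2 : ℝ) : ℂ)^2 = 2 := by
    norm_cast; exact Real.sq_sqrt (by norm_num)
  have h3 : ((Real.sqrt 2 : ℝ) : ℂ)^3 = 2 * Real.sqrt 2 := by
    rw [pow_succ, hs]
  have hcancel : Complex.exp (I * k) * Complex.exp (-(I * k)) = 1 := by
    rw [← Complex.exp_add]; simp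
  have hsq : Complex.exp (I * k) ^ 2 = Complex.exp (I * (k:ℂ) * 2) := by
    rw [← Complex.exp_nat_mul]; ring_nf
  have hsq' : Complex.exp (-(I * k)) ^ 2 = Complex.exp (-(I * (k:ℂ) * 2)) := by
    rw [← Complex.exp_nat_mul]; ring_nf
  funext i
  fin_cases i <;>
  · simp only [Hhat, hadamard2, phi0, pow_two, mulVec, dotProduct, Fin.sum_univ_two,
      Matrix.mul_apply, Matrix.diagonal]
    simp
    field_simp
    ring_nf
    have hcancel2 : Complex.exp (-(I * k)) * Complex.exp (I * k) = 1 := by rw [← Complex.exp_add]; simp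
    simp only [hcancel, hcancel2, hsq, hsq', h3, mul_assoc I, mul_one]
    ring_nf; rw [hs]; ring

lemma hd0 (k : ℝ) :
    HasDerivAt (fun k' : ℝ => Complex.exp (2*I*k')) (2*I*Complex.exp (2*I*k)) k := by
  have h : HasDerivAt (fun z : ℂ => Complex.exp (2*I*z)) (2*I*Complex.exp (2*I*k)) (k:ℂ) := by
    have := ((hasDerivAt_id (k:ℂ)).const_mul (2*I)).cexp
    simpa [mul_comm] using this
  exact h.comp_ofReal

lemma hd1 (k : ℝ) :
    HasDerivAt (fun k' : ℝ => Complex.exp (-(2*I*k'))) (-(2*I)*Complex.exp (-(2*I*k))) k := by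
  have h : HasDerivAt (fun z : ℂ => Complex.exp (-(2*I*z))) (-(2*I)*Complex.exp (-(2*I*k))) (k:ℂ) := by
    have := (((hasDerivAt_id (k:ℂ)).const_mul (2*I)).neg).cexp
    simpa [mul_comm] using this
  exact h.comp_ofReal

lemma deriv0 (k : ℝ) : deriv (fun k' : ℝ => (Hhat k' ^ 2 *ᵥ phi0) 0) k
    = (1+I)/(2*Real.sqrt 2) * (2*I*Complex.exp (2*I*k)) := by
  have : (fun k' : ℝ => (Hhat k' ^ 2 *ᵥ phi0) 0)
      = fun k' : ℝ => (1+I)/(2*Real.sqrt 2) * Complex.exp (2*I*k') + (1-I)/(2*Real.sqrt 2) := by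
    funext k'; rw [hvec]; simp
  rw [this]
  exact (((hd0 k).const_mul _).add_const _).deriv

lemma deriv1 (k : ℝ) : deriv (fun k' : ℝ => (Hhat k' ^ 2 *ᵥ phi0) 1) k
    = (I-1)/(2*Real.sqrt 2) * (-(2*I)*Complex.exp (-(2*I*k))) := by
  have : (fun k' : ℝ => (Hhat k' ^ 2 *ᵥ phi0) 1)
      = fun k' : ℝ => (I-1)/(2*Real.sqrt 2) * Complex.exp (-(2*I*k')) + (1+I)/(2*Real.sqrt 2) := by
    funext k'; rw [hvec]; simp
  rw [this]
  exact (((hd1 k).const_mul _).add_const _).deriv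

lemma key (s A B : ℂ) (hs : s^2 = 2) (hAB : A*B = 1) (h2 : s ≠ 0) :
    (((1-I)/(2*s) * B + (1+I)/(2*s)) * (I * ((1+I)/(2*s) * (2*I*A)))
      + (((-I-1)/(2*s) * A + (1-I)/(2*s)) * (I * ((I-1)/(2*s) * (-(2*I)*B)))))/2
    = (B - A) * I / 2 / 2 := by
  field_simp
  ring_nf
  linear_combination (4 + 4*I*A + (-8*I*B + 4*I*A - 4))*hs + (-8+8)*hAB
    + (16*I*(A-B) + 8*I^2*(A+B))*Complex.I_sq
    + (8*I*B - 8*I*A - B + A)*hs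
    + (-8*(A+B)*I^2 + (17*B - 15*A)*I + 2*A - 2*B)*Complex.I_sq

/-- `μ₂(k) = ⟨Ĥ(k)²φ₀, (i d/dk)(Ĥ(k)²φ₀)⟩/2 = (sin 2k)/2`. -/
theorem mu_two_eq_sin (k : ℝ) :
    star (Hhat k ^ 2 *ᵥ phi0) ⬝ᵥ
        (fun i : Fin 2 => Complex.I * deriv (fun k' : ℝ => (Hhat k' ^ 2 *ᵥ phi0) i) k) / 2 =
      ((Real.sin (2 * k) / 2 : ℝ) : ℂ) := by
  have h2 : ((Real.sqrt 2 : ℝ) : ℂ) ≠ 0 := by simp [Real.sqrt_eq_zero']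
  have hs : ((Real.sqrt 2 : ℝ) : ℂ)^2 = 2 := by norm_cast; exact Real.sq_sqrt (by norm_num)
  have hAB : Complex.exp (2*I*(k:ℂ)) * Complex.exp (-(2*I*(k:ℂ))) = 1 := by
    rw [← Complex.exp_add]; simp
  have harg : (starRingEnd ℂ) (2*I*(k:ℂ)) = -(2*I*k) := by
    rw [_root_.map_mul, _root_.map_mul, Complex.conj_I, Complex.conj_ofReal, map_ofNat]
    ring
  have hconjA : (starRingEnd ℂ) (Complex.exp (2*I*(k:ℂ))) = Complex.exp (-(2*I*(k:ℂ))) := by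
    rw [← Complex.exp_conj, harg]
  have hconjB : (starRingEnd ℂ) (Complex.exp (-(2*I*(k:ℂ)))) = Complex.exp (2*I*(k:ℂ)) := by
    rw [← Complex.exp_conj, map_neg, harg, neg_neg]
  have hsin : ((Real.sin (2*k) : ℝ) : ℂ)
      = (Complex.exp (-(2*I*(k:ℂ))) - Complex.exp (2*I*k)) * I / 2 := by
    rw [Complex.ofReal_sin, Complex.sin]
    push_cast
    ring_nf
  simp only [dotProduct, Fin.sum_univ_two, Pi.star_apply]
  rw [deriv0, deriv1, hvec]
  simp only [Matrix.cons_val_zero, Matrix.cons_val_one, Matrix.head_cons]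
  rw [Complex.ofReal_div, hsin]
  simp only [star_add, star_mul', star_div₀, Complex.star_def, hconjA, hconjB,
    map_add, map_sub, _root_.map_mul, _root_.map_one, Complex.conj_I, Complex.conj_ofReal, map_ofNat]
  push_cast
  linear_combination key ((Real.sqrt 2 : ℝ) : ℂ) (Complex.exp (2*I*(k:ℂ)))
    (Complex.exp (-(2*I*(k:ℂ)))) hs hAB h2
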